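/- For every ℓ ≥ 2 and Δ ≥ 2, the graph J(ℓ) (defined below) is a connected Δ-regular graph on ℓ(Δ+1) vertices whose number of frozen (Δ+1)-colourings is at least ((Δ−1)!)^ℓ. -/
import Mathlib


/-- The graph `J(ℓ)`: vertices `v_i^j` for `i ∈ ℤ/ℓ`, `j ∈ Fin (Δ+1)` (index `0`
plays the role of superscript `1` and `Fin.last Δ` that of superscript `Δ+1`).
Within each block `i` all pairs are adjacent except `v_i^1 v_i^{Δ+1}`, and
`v_{i+1}^1` is adjacent to `v_i^{Δ+1}`. -/
def J (Δ ℓ : ℕ) : SimpleGraph (ZMod ℓ × Fin (Δ + 1)) :=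
  SimpleGraph.fromRel (fun x y =>
    (x.1 = y.1 ∧ ¬(x.2 = 0 ∧ y.2 = Fin.last Δ) ∧ ¬(x.2 = Fin.last Δ ∧ y.2 = 0)) ∨
    (x.1 = y.1 + 1 ∧ x.2 = 0 ∧ y.2 = Fin.last Δ))

namespace JAux

variable {Δ ℓ : ℕ}

lemma last_ne_zero (hΔ : 2 ≤ Δ) : (Fin.last Δ : Fin (Δ+1)) ≠ 0 := by
  simp [Fin.ext_iff]
  omega

lemma adj_zero (hΔ : 2 ≤ Δ) (i a : ZMod ℓ) (b : Fin (Δ+1)) :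
    (J Δ ℓ).Adj (i, 0) (a, b) ↔
      (a = i ∧ b ≠ 0 ∧ b ≠ Fin.last Δ) ∨ (i = a + 1 ∧ b = Fin.last Δ) := by
  rw [J, SimpleGraph.fromRel_adj]
  constructor
  · rintro ⟨hne, (⟨h1, h2, h3⟩ | ⟨h1, h2, h3⟩) | (⟨h1, h2, h3⟩ | ⟨h1, h2, h3⟩)⟩
    · exact Or.inl ⟨h1.symm, fun hb => hne (by refine Prod.ext ?_ hb.symm; first | exact h1 | exact h1.symm), fun hb => h2 ⟨rfl, hb⟩⟩
    · exact Or.inr ⟨h1, h3⟩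
    · exact Or.inl ⟨h1, fun hb => hne (by refine Prod.ext ?_ hb.symm; first | exact h1 | exact h1.symm), fun hb => h3 ⟨hb, rfl⟩⟩
    · exact absurd h3.symm (last_ne_zero hΔ)
  · rintro (⟨ha, hb0, hbl⟩ | ⟨hi, hbl⟩)
    · refine ⟨fun h => hb0 (congrArg Prod.snd h).symm,
        Or.inl (Or.inl ⟨ha.symm, fun h => hbl h.2, fun h => last_ne_zero hΔ h.1.symm⟩)⟩
    · exact ⟨fun h => last_ne_zero hΔ (hbl ▸ (congrArg Prod.snd h)).symm,
        Or.inl (Or.inr ⟨hi, rfl, hbl⟩)⟩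

lemma adj_last (hΔ : 2 ≤ Δ) (i a : ZMod ℓ) (b : Fin (Δ+1)) :
    (J Δ ℓ).Adj (i, Fin.last Δ) (a, b) ↔
      (a = i ∧ b ≠ 0 ∧ b ≠ Fin.last Δ) ∨ (a = i + 1 ∧ b = 0) := by
  rw [J, SimpleGraph.fromRel_adj]
  constructor
  · rintro ⟨hne, (⟨h1, h2, h3⟩ | ⟨h1, h2, h3⟩) | (⟨h1, h2, h3⟩ | ⟨h1, h2, h3⟩)⟩
    · exact Or.inl ⟨h1.symm, fun hb => h3 ⟨rfl, hb⟩, fun hb => hne (by refine Prod.ext ?_ hb.symm; first | exact h1 | exact h1.symm)⟩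
    · exact absurd h2 (last_ne_zero hΔ)
    · exact Or.inl ⟨h1, fun hb => h2 ⟨hb, rfl⟩, fun hb => hne (by refine Prod.ext ?_ hb.symm; first | exact h1 | exact h1.symm)⟩
    · exact Or.inr ⟨h1, h2⟩
  · rintro (⟨ha, hb0, hbl⟩ | ⟨ha, hb0⟩)
    · refine ⟨fun h => hbl (congrArg Prod.snd h).symm,
        Or.inl (Or.inl ⟨ha.symm, fun h => last_ne_zero hΔ h.1, fun h => hb0 h.2⟩)⟩
    · exact ⟨fun h => last_ne_zero hΔ (hb0 ▸ (congrArg Prod.snd h)), Or.inr (Or.inr ⟨ha, hb0, rfl⟩)⟩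

lemma adj_mid (i : ZMod ℓ) {j : Fin (Δ+1)} (hj0 : j ≠ 0) (hjl : j ≠ Fin.last Δ)
    (a : ZMod ℓ) (b : Fin (Δ+1)) :
    (J Δ ℓ).Adj (i, j) (a, b) ↔ a = i ∧ b ≠ j := by
  rw [J, SimpleGraph.fromRel_adj]
  constructor
  · rintro ⟨hne, (⟨h1, h2, h3⟩ | ⟨h1, h2, h3⟩) | (⟨h1, h2, h3⟩ | ⟨h1, h2, h3⟩)⟩
    · exact ⟨h1.symm, fun hb => hne (by refine Prod.ext ?_ hb.symm; first | exact h1 | exact h1.symm)⟩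
    · exact absurd h2 hj0
    · exact ⟨h1, fun hb => hne (by refine Prod.ext ?_ hb.symm; first | exact h1 | exact h1.symm)⟩
    · exact absurd h3 hjl
  · rintro ⟨ha, hb⟩
    exact ⟨fun h => hb (congrArg Prod.snd h).symm,
      Or.inl (Or.inl ⟨ha.symm, fun h => hj0 h.1, fun h => hjl h.1⟩)⟩

/-- The frozen colouring associated to a family of permutations. -/
def colα (Δ : ℕ) {ℓ : ℕ} (f : ZMod ℓ → Equiv.Perm (Fin (Δ - 1)))
    (p : ZMod ℓ × Fin (Δ + 1)) : Fin (Δ + 1) :=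
  if h0 : p.2.val = 0 then 0
  else if h1 : p.2.val = Δ then Fin.last Δ
  else ((f p.1 ⟨p.2.val - 1, by have := p.2.isLt; omega⟩).castLE (Nat.sub_le Δ 1)).succ

lemma colα_zero (f : ZMod ℓ → Equiv.Perm (Fin (Δ - 1))) (i : ZMod ℓ) :
    colα Δ f (i, 0) = 0 := by
  simp [colα]

lemma colα_last (hΔ : 2 ≤ Δ) (f : ZMod ℓ → Equiv.Perm (Fin (Δ - 1))) (i : ZMod ℓ) :
    colα Δ f (i, Fin.last Δ) = Fin.last Δ := by
  simp only [colα, Fin.val_last]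
  rw [dif_neg (by omega)]
  simp

lemma colα_mid (f : ZMod ℓ → Equiv.Perm (Fin (Δ - 1))) (i : ZMod ℓ) (j : Fin (Δ + 1))
    (h0 : j.val ≠ 0) (h1 : j.val ≠ Δ) :
    colα Δ f (i, j) =
      ((f i ⟨j.val - 1, by have := j.isLt; omega⟩).castLE (Nat.sub_le Δ 1)).succ := by
  simp only [colα]
  rw [dif_neg h0, dif_neg h1]

lemma colα_inj (hΔ : 2 ≤ Δ) (f : ZMod ℓ → Equiv.Perm (Fin (Δ - 1))) (i : ZMod ℓ) :
    Function.Injective (fun j : Fin (Δ + 1) => colα Δ f (i, j)) := by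
  intro a b h
  simp only [colα] at h
  split_ifs at h with h1 h2 h3 h4
  · exact Fin.ext (by omega)
  · exact absurd (congrArg Fin.val h) (by simp; omega)
  · exact absurd (congrArg Fin.val h) (by simp)
  · exact absurd (congrArg Fin.val h) (by simp; omega)
  · exact Fin.ext (by omega)
  · have := (f i ⟨b.val - 1, by have := b.isLt; omega⟩).isLt
    exact absurd (congrArg Fin.val h) (by simp; omega)
  · exact absurd (congrArg Fin.val h) (by simp)
  · have := (f i ⟨a.val - 1, by have := a.isLt; omega⟩).isLt
    exact absurd (congrArg Fin.val h) (by simp; omega)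
  · have h' := congrArg Fin.val h
    simp only [Fin.val_succ, Fin.coe_castLE] at h'
    have harg : (f i ⟨a.val - 1, by have := a.isLt; omega⟩)
        = (f i ⟨b.val - 1, by have := b.isLt; omega⟩) := Fin.ext (by omega)
    have := (f i).injective harg
    have hval : a.val - 1 = b.val - 1 := congrArg Fin.val this
    exact Fin.ext (by omega)

lemma colα_proper (hΔ : 2 ≤ Δ) (f : ZMod ℓ → Equiv.Perm (Fin (Δ - 1))) :
    ∀ u v, (J Δ ℓ).Adj u v → colα Δ f u ≠ colα Δ f v := by
  rintro ⟨i, a⟩ ⟨i', b⟩ huv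
  rw [J, SimpleGraph.fromRel_adj] at huv
  obtain ⟨hne, h⟩ := huv
  rcases h with (⟨h1, _, _⟩ | ⟨h1, h2, h3⟩) | (⟨h1, _, _⟩ | ⟨h1, h2, h3⟩)
  · cases h1
    exact fun hc => hne (Prod.ext rfl (colα_inj hΔ f i hc))
  · simp only at h2 h3
    rw [h2, h3, colα_zero, colα_last hΔ]
    exact (JAux.last_ne_zero hΔ).symm
  · simp only at h1; cases h1
    exact fun hc => hne (Prod.ext rfl (colα_inj hΔ f i hc))
  · simp only at h2 h3
    rw [h2, h3, colα_zero, colα_last hΔ]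
    exact JAux.last_ne_zero hΔ

lemma colα_frozen (hΔ : 2 ≤ Δ) (f : ZMod ℓ → Equiv.Perm (Fin (Δ - 1))) :
    ∀ v c, ∃ u, (u = v ∨ (J Δ ℓ).Adj v u) ∧ colα Δ f u = c := by
  rintro ⟨i, j⟩ c
  by_cases hc0 : c.val = 0
  · have hc : c = 0 := Fin.ext (by simpa using hc0)
    by_cases hj0 : j.val = 0
    · exact ⟨(i, j), Or.inl rfl, by
        rw [show j = 0 from Fin.ext (by simpa using hj0), colα_zero, hc]⟩
    · by_cases hjΔ : j.val = Δ
      · refine ⟨(i + 1, 0), Or.inr ?_, by rw [colα_zero, hc]⟩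
        rw [show j = Fin.last Δ from Fin.ext (by simpa using hjΔ), JAux.adj_last hΔ]
        exact Or.inr ⟨rfl, rfl⟩
      · refine ⟨(i, 0), Or.inr ?_, by rw [colα_zero, hc]⟩
        rw [JAux.adj_mid i (fun h => hj0 (by simp [h])) (fun h => hjΔ (by simp [h]))]
        exact ⟨rfl, fun h => hj0 (by simp [← h])⟩
  · by_cases hcΔ : c.val = Δ
    · have hc : c = Fin.last Δ := Fin.ext (by simpa using hcΔ)
      by_cases hjΔ : j.val = Δ
      · exact ⟨(i, j), Or.inl rfl, by
          rw [show j = Fin.last Δ from Fin.ext (by simpa using hjΔ), colα_last hΔ, hc]⟩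
      · by_cases hj0 : j.val = 0
        · refine ⟨(i - 1, Fin.last Δ), Or.inr ?_, by rw [colα_last hΔ, hc]⟩
          rw [show j = 0 from Fin.ext (by simpa using hj0), JAux.adj_zero hΔ]
          exact Or.inr ⟨by ring, rfl⟩
        · refine ⟨(i, Fin.last Δ), Or.inr ?_, by rw [colα_last hΔ, hc]⟩
          rw [JAux.adj_mid i (fun h => hj0 (by simp [h])) (fun h => hjΔ (by simp [h]))]
          exact ⟨rfl, fun h => hjΔ (by simp [← h])⟩
    · have hcv : c.val - 1 < Δ - 1 := by have := c.isLt; omega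
      set x : Fin (Δ - 1) := (f i).symm ⟨c.val - 1, hcv⟩ with hxdef
      have hx : x.val < Δ - 1 := x.isLt
      refine ⟨(i, ⟨x.val + 1, by omega⟩), ?_, ?_⟩
      · by_cases hj : j = (⟨x.val + 1, by omega⟩ : Fin (Δ + 1))
        · exact Or.inl (Prod.ext rfl hj.symm)
        · refine Or.inr ?_
          have h2 : (J Δ ℓ).Adj (i, (⟨x.val + 1, by omega⟩ : Fin (Δ + 1))) (i, j) := by
            rw [JAux.adj_mid i (Fin.ne_of_val_ne (by simp)) (fun h => by
              have := congrArg Fin.val h; simp [Fin.val_last] at this; omega)]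
            exact ⟨rfl, hj⟩
          exact h2.symm
      · rw [colα_mid f i _ (by simp) (by simp; omega)]
        apply Fin.ext
        simp only [Fin.val_succ, Fin.coe_castLE]
        have harg : (⟨(⟨x.val + 1, by omega⟩ : Fin (Δ + 1)).val - 1, by
            have := hx; simp⟩ : Fin (Δ - 1)) = x := Fin.ext (by simp)
        rw [harg, hxdef, Equiv.apply_symm_apply]
        simp
        try omega

lemma reach_aux (hΔ : 2 ≤ Δ) (i : ZMod ℓ) (j : Fin (Δ + 1)) :
    (J Δ ℓ).Reachable (i, 0) (i, j) := by
  by_cases hj0 : j.val = 0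
  · rw [show j = 0 from Fin.ext (by simpa using hj0)]
  · by_cases hjΔ : j.val = Δ
    · have h1 : (J Δ ℓ).Adj (i, 0) (i, (⟨1, by omega⟩ : Fin (Δ + 1))) := by
        rw [JAux.adj_zero hΔ]
        exact Or.inl ⟨rfl, Fin.ne_of_val_ne (by simp),
          Fin.ne_of_val_ne (by simp [Fin.val_last]; omega)⟩
      have h2 : (J Δ ℓ).Adj (i, (⟨1, by omega⟩ : Fin (Δ + 1))) (i, j) := by
        rw [JAux.adj_mid i (Fin.ne_of_val_ne (by simp))
          (Fin.ne_of_val_ne (by simp [Fin.val_last]; omega))]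
        exact ⟨rfl, Fin.ne_of_val_ne (by simp; omega)⟩
      exact h1.reachable.trans h2.reachable
    · refine SimpleGraph.Adj.reachable ?_
      rw [JAux.adj_zero hΔ]
      exact Or.inl ⟨rfl, Fin.ne_of_val_ne (by simpa using hj0),
        Fin.ne_of_val_ne (by simp [Fin.val_last]; omega)⟩

lemma reach_step (hΔ : 2 ≤ Δ) (i : ZMod ℓ) :
    (J Δ ℓ).Reachable (i, 0) (i + 1, 0) := by
  refine (reach_aux hΔ i (Fin.last Δ)).trans (SimpleGraph.Adj.reachable ?_)
  rw [JAux.adj_last hΔ]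
  exact Or.inr ⟨rfl, rfl⟩

lemma card_ne (c : Fin (Δ + 1)) : Nat.card {b : Fin (Δ + 1) // b ≠ c} = Δ := by
  rw [Nat.card_eq_fintype_card]
  have h := Fintype.card_subtype_compl (fun b : Fin (Δ + 1) => b = c)
  simpa [Fintype.card_subtype_eq] using h

end JAux

theorem stmt_14 (Δ ℓ : ℕ) (hℓ : 2 ≤ ℓ) (hΔ : 2 ≤ Δ) :
    (J Δ ℓ).Connected ∧
      Nat.card (ZMod ℓ × Fin (Δ + 1)) = ℓ * (Δ + 1) ∧
      (∀ v : ZMod ℓ × Fin (Δ + 1), Nat.card {u // (J Δ ℓ).Adj v u} = Δ) ∧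
      (Nat.factorial (Δ - 1)) ^ ℓ ≤
        Nat.card {α : ZMod ℓ × Fin (Δ + 1) → Fin (Δ + 1) //
          (∀ u v, (J Δ ℓ).Adj u v → α u ≠ α v) ∧
          (∀ v c, ∃ u, (u = v ∨ (J Δ ℓ).Adj v u) ∧ α u = c)} := by
  haveI : NeZero ℓ := ⟨by omega⟩
  refine ⟨?_, ?_, ?_, ?_⟩
  · -- connectivity
    have reach0 : ∀ k : ℕ, (J Δ ℓ).Reachable ((0 : ZMod ℓ), 0) (((k : ℕ) : ZMod ℓ), 0) := by
      intro k
      induction k with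
      | zero =>
        rw [Nat.cast_zero]
      | succ n ih =>
        have h := ih.trans (JAux.reach_step hΔ ((n : ℕ) : ZMod ℓ))
        rw [Nat.cast_add, Nat.cast_one]
        exact h
    have key : ∀ w : ZMod ℓ × Fin (Δ + 1), (J Δ ℓ).Reachable ((0 : ZMod ℓ), 0) w := by
      rintro ⟨i, j⟩
      obtain ⟨k, rfl⟩ := ZMod.natCast_zmod_surjective i
      exact (reach0 k).trans (JAux.reach_aux hΔ _ j)
    rw [SimpleGraph.connected_iff]
    exact ⟨fun u v => (key u).symm.trans (key v), ⟨((0 : ZMod ℓ), 0)⟩⟩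
  · rw [Nat.card_prod, Nat.card_zmod, Nat.card_eq_fintype_card, Fintype.card_fin]
  · rintro ⟨i, j⟩
    by_cases hj0 : j.val = 0
    · rw [show j = 0 from Fin.ext (by simpa using hj0)]
      have key : ∀ u : {u // (J Δ ℓ).Adj (i, 0) u}, u.1.2 ≠ 0 := by
        rintro ⟨⟨a, b⟩, hadj⟩
        show b ≠ 0
        rw [JAux.adj_zero hΔ] at hadj
        rcases hadj with ⟨_, h, _⟩ | ⟨_, h⟩
        · exact h
        · rw [h]; exact JAux.last_ne_zero hΔ
      have hbij : Function.Bijective (fun u : {u // (J Δ ℓ).Adj (i, 0) u} =>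
          (⟨u.1.2, key u⟩ : {b : Fin (Δ + 1) // b ≠ 0})) := by
        constructor
        · rintro ⟨⟨a, b⟩, ha⟩ ⟨⟨a', b'⟩, ha'⟩ h
          simp only [Subtype.mk.injEq] at h
          subst h
          rw [JAux.adj_zero hΔ] at ha ha'
          have hA : a = a' := by
            rcases ha with ⟨h1, h2, h3⟩ | ⟨h1, h3⟩ <;>
              rcases ha' with ⟨h1', h2', h3'⟩ | ⟨h1', h3'⟩
            · rw [h1, h1']
            · exact absurd h3' h3
            · exact absurd h3 h3'
            · exact add_right_cancel (h1.symm.trans h1')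
          exact Subtype.ext (by show (_, b) = (_, b); rw [hA])
        · rintro ⟨b, hb⟩
          by_cases hbl : b = Fin.last Δ
          · exact ⟨⟨(i - 1, b), by rw [JAux.adj_zero hΔ]; exact Or.inr ⟨by ring, hbl⟩⟩, rfl⟩
          · exact ⟨⟨(i, b), by rw [JAux.adj_zero hΔ]; exact Or.inl ⟨rfl, hb, hbl⟩⟩, rfl⟩
      rw [Nat.card_congr (Equiv.ofBijective _ hbij), JAux.card_ne]
    · by_cases hjl : j.val = Δ
      · rw [show j = Fin.last Δ from Fin.ext (by simpa using hjl)]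
        have key : ∀ u : {u // (J Δ ℓ).Adj (i, Fin.last Δ) u}, u.1.2 ≠ Fin.last Δ := by
          rintro ⟨⟨a, b⟩, hadj⟩
          show b ≠ Fin.last Δ
          rw [JAux.adj_last hΔ] at hadj
          rcases hadj with ⟨_, _, h⟩ | ⟨_, h⟩
          · exact h
          · rw [h]; exact (JAux.last_ne_zero hΔ).symm
        have hbij : Function.Bijective (fun u : {u // (J Δ ℓ).Adj (i, Fin.last Δ) u} =>
            (⟨u.1.2, key u⟩ : {b : Fin (Δ + 1) // b ≠ Fin.last Δ})) := by
          constructor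
          · rintro ⟨⟨a, b⟩, ha⟩ ⟨⟨a', b'⟩, ha'⟩ h
            simp only [Subtype.mk.injEq] at h
            subst h
            rw [JAux.adj_last hΔ] at ha ha'
            have hA : a = a' := by
              rcases ha with ⟨h1, h2, h3⟩ | ⟨h1, h3⟩ <;>
                rcases ha' with ⟨h1', h2', h3'⟩ | ⟨h1', h3'⟩
              · rw [h1, h1']
              · exact absurd h3' h2
              · exact absurd h3 h2'
              · rw [h1, h1']
            exact Subtype.ext (by show (_, b) = (_, b); rw [hA])
          · rintro ⟨b, hb⟩
            by_cases hb0 : b = 0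
            · exact ⟨⟨(i + 1, b), by rw [JAux.adj_last hΔ]; exact Or.inr ⟨rfl, hb0⟩⟩, rfl⟩
            · exact ⟨⟨(i, b), by rw [JAux.adj_last hΔ]; exact Or.inl ⟨rfl, hb0, hb⟩⟩, rfl⟩
        rw [Nat.card_congr (Equiv.ofBijective _ hbij), JAux.card_ne]
      · have hne0 : j ≠ 0 := fun h => hj0 (by simp [h])
        have hnel : j ≠ Fin.last Δ := fun h => hjl (by simp [h])
        have key : ∀ u : {u // (J Δ ℓ).Adj (i, j) u}, u.1.2 ≠ j := by
          rintro ⟨⟨a, b⟩, hadj⟩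
          show b ≠ j
          rw [JAux.adj_mid i hne0 hnel] at hadj
          exact hadj.2
        have hbij : Function.Bijective (fun u : {u // (J Δ ℓ).Adj (i, j) u} =>
            (⟨u.1.2, key u⟩ : {b : Fin (Δ + 1) // b ≠ j})) := by
          constructor
          · rintro ⟨⟨a, b⟩, ha⟩ ⟨⟨a', b'⟩, ha'⟩ h
            simp only [Subtype.mk.injEq] at h
            subst h
            rw [JAux.adj_mid i hne0 hnel] at ha ha'
            exact Subtype.ext (by show (_, b) = (_, b); rw [ha.1, ha'.1])
          · rintro ⟨b, hb⟩
            exact ⟨⟨(i, b), by rw [JAux.adj_mid i hne0 hnel]; exact ⟨rfl, hb⟩⟩, rfl⟩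
        rw [Nat.card_congr (Equiv.ofBijective _ hbij), JAux.card_ne]
  · have hinj : Function.Injective (fun f : ZMod ℓ → Equiv.Perm (Fin (Δ - 1)) =>
        (⟨JAux.colα Δ f, JAux.colα_proper hΔ f, JAux.colα_frozen hΔ f⟩ :
          {α : ZMod ℓ × Fin (Δ + 1) → Fin (Δ + 1) //
            (∀ u v, (J Δ ℓ).Adj u v → α u ≠ α v) ∧
            (∀ v c, ∃ u, (u = v ∨ (J Δ ℓ).Adj v u) ∧ α u = c)})) := by
      intro f g h
      have h' : JAux.colα Δ f = JAux.colα Δ g := congrArg Subtype.val h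
      funext i
      apply Equiv.ext
      intro x
      have hx := x.isLt
      have hj := congrFun h' (i, (⟨x.val + 1, by omega⟩ : Fin (Δ + 1)))
      rw [JAux.colα_mid f i _ (by simp) (by simp; omega),
          JAux.colα_mid g i _ (by simp) (by simp; omega)] at hj
      have harg : (⟨(⟨x.val + 1, by omega⟩ : Fin (Δ + 1)).val - 1, by
          simp⟩ : Fin (Δ - 1)) = x := Fin.ext (by simp)
      rw [harg] at hj
      have hval := congrArg Fin.val hj
      simp only [Fin.val_succ, Fin.coe_castLE] at hval
      exact Fin.ext (by omega)
    calc (Δ - 1).factorial ^ ℓ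
        = Nat.card (ZMod ℓ → Equiv.Perm (Fin (Δ - 1))) := by
          rw [Nat.card_fun, Nat.card_zmod, Nat.card_eq_fintype_card,
            Fintype.card_perm, Fintype.card_fin]
      _ ≤ _ := Nat.card_le_card_of_injective _ hinj
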